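/- arXiv:0811.4309 — 2 statements merged into one kernel-verified Lean document; each statement's English description precedes it below -/
import Mathlib

section
/- Let A = A_q^a be a quantum complete intersection over a field k, and let φ : A → k be the k-linear functional sending an element of A to the coefficient of the monomial x_c^{a_c−1}⋯x_1^{a_1−1} with respect to the k-basis {x_c^{i_c}⋯x_1^{i_1} : 0 ≤ i_w ≤ a_w − 1}. Then the bilinear form A × A → k, (x, y) ↦ φ(xy), is nondegenerate; equivalently, the map A → Hom_k(A, k) sending a to the functional λ ↦ φ(λa) is an isomorphism of left A-modules, where Hom_k(A,k) carries the left A-module structure (b·f)(λ) = f(λb). In particular A is a Frobenius algebra. -/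
/-!
The bilinear form `(x,y) ↦ φ(xy)`, where `φ` extracts the coefficient of the socle
monomial `x_c^{a_c-1} ⋯ x_1^{a_1-1}` in the basis of descending monomials, is
nondegenerate, and `a ↦ (λ ↦ φ(λa))` is an isomorphism of left `A`-modules
`A ≅ Hom_k(A,k)`; in particular `A_q^a` is Frobenius (Lemma `nakayama`, Frobenius part).
-/

noncomputable section

/-- The defining relations of the quantum complete intersection `A_q^a`:
`X_i ^ (a i) = 0` and `X_i * X_j = q i j • (X_j * X_i)`. -/
def qciRel (k : Type) [Field k] (c : ℕ) (q : Fin c → Fin c → k) (a : Fin c → ℕ) :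
    FreeAlgebra k (Fin c) → FreeAlgebra k (Fin c) → Prop := fun x y =>
  (∃ i, x = FreeAlgebra.ι k i ^ a i ∧ y = 0) ∨
  (∃ i j, x = FreeAlgebra.ι k i * FreeAlgebra.ι k j ∧
    y = q i j • (FreeAlgebra.ι k j * FreeAlgebra.ι k i))

/-- The quantum complete intersection `A_q^a = k⟨X_1,…,X_c⟩/(X_i^{a_i}, X_iX_j - q_{ij}X_jX_i)`. -/
abbrev QCI (k : Type) [Field k] (c : ℕ) (q : Fin c → Fin c → k) (a : Fin c → ℕ) : Type :=
  RingQuot (qciRel k c q a)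

/-- The generator `x_i` of `A_q^a` (the image of `X_i`). -/
def qciX (k : Type) [Field k] {c : ℕ} (q : Fin c → Fin c → k) (a : Fin c → ℕ) (i : Fin c) :
    QCI k c q a :=
  RingQuot.mkAlgHom k (qciRel k c q a) (FreeAlgebra.ι k i)

/-- The descending monomial `x_c^{d_c} ⋯ x_1^{d_1}` in `A_q^a`. -/
def qciDMono (k : Type) [Field k] {c : ℕ} (q : Fin c → Fin c → k) (a : Fin c → ℕ)
    (d : (i : Fin c) → Fin (a i)) : QCI k c q a :=
  (List.ofFn fun w : Fin c => qciX k q a w.rev ^ (d w.rev : ℕ)).prod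

section aux
variable {k : Type} [Field k] {c : ℕ} {q : Fin c → Fin c → k} {a : Fin c → ℕ}

lemma qciX_pow_a (i : Fin c) : qciX k q a i ^ a i = 0 := by
  have hr : qciRel k c q a (FreeAlgebra.ι k i ^ a i) 0 := Or.inl ⟨i, rfl, rfl⟩
  have := RingQuot.mkAlgHom_rel k hr
  simpa [qciX, map_pow] using this

lemma qciX_comm (i j : Fin c) :
    qciX k q a i * qciX k q a j = q i j • (qciX k q a j * qciX k q a i) := by
  have hr : qciRel k c q a (FreeAlgebra.ι k i * FreeAlgebra.ι k j)
      (q i j • (FreeAlgebra.ι k j * FreeAlgebra.ι k i)) := Or.inr ⟨i, j, rfl, rfl⟩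
  have := RingQuot.mkAlgHom_rel k hr
  simpa [qciX, map_mul, map_smul] using this

lemma qciX_comm_pow (i j : Fin c) (n : ℕ) :
    qciX k q a i * qciX k q a j ^ n
      = q i j ^ n • (qciX k q a j ^ n * qciX k q a i) := by
  induction n with
  | zero => simp
  | succ n ih =>
    rw [pow_succ', ← mul_assoc, qciX_comm, smul_mul_assoc, mul_assoc, ih,
      mul_smul_comm, smul_smul, pow_succ', ← mul_assoc]

lemma qciX_pow_comm_pow (i j : Fin c) (m n : ℕ) :
    qciX k q a i ^ m * qciX k q a j ^ n
      = q i j ^ (m * n) • (qciX k q a j ^ n * qciX k q a i ^ m) := by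
  induction m with
  | zero => simp
  | succ m ih =>
    rw [pow_succ', mul_assoc, ih, mul_smul_comm, ← mul_assoc, qciX_comm_pow,
      smul_mul_assoc, smul_smul, mul_assoc, ← pow_add]
    ring_nf

end aux

section aux2
variable {k : Type} [Field k] {c : ℕ} {q : Fin c → Fin c → k} {a : Fin c → ℕ}

/-- Product of powers along a list of indices. -/
def qciN (q : Fin c → Fin c → k) (a : Fin c → ℕ) (L : List (Fin c)) (h : Fin c → ℕ) :
    QCI k c q a :=
  (L.map fun j => qciX k q a j ^ h j).prod

/-- The normal-form monomial with natural exponents. -/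
def qciM (q : Fin c → Fin c → k) (a : Fin c → ℕ) (h : Fin c → ℕ) : QCI k c q a :=
  qciN q a ((List.finRange c).map Fin.rev) h

lemma qciN_nil (h : Fin c → ℕ) : qciN q a ([] : List (Fin c)) h = 1 := rfl

lemma qciN_cons (j : Fin c) (L : List (Fin c)) (h : Fin c → ℕ) :
    qciN q a (j :: L) h = qciX k q a j ^ h j * qciN q a L h := by
  simp [qciN]

lemma qciN_append (L₁ L₂ : List (Fin c)) (h : Fin c → ℕ) :
    qciN q a (L₁ ++ L₂) h = qciN q a L₁ h * qciN q a L₂ h := by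
  simp [qciN]

lemma qciN_congr {L : List (Fin c)} {h h' : Fin c → ℕ} (hh : ∀ j ∈ L, h j = h' j) :
    qciN q a L h = qciN q a L h' := by
  unfold qciN
  congr 1
  exact List.map_congr_left fun j hj => by rw [hh j hj]

lemma qciDMono_eq (d : (i : Fin c) → Fin (a i)) :
    qciDMono k q a d = qciM q a (fun i => (d i : ℕ)) := by
  simp only [qciDMono, qciM, qciN, List.ofFn_eq_map, List.map_map]
  rfl

lemma qci_pow_mul_N (i : Fin c) (n : ℕ) (L : List (Fin c)) (h : Fin c → ℕ) :
    qciX k q a i ^ n * qciN q a L h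
      = ((L.map fun j => q i j ^ (n * h j)).prod) • (qciN q a L h * qciX k q a i ^ n) := by
  induction L with
  | nil => simp [qciN_nil]
  | cons j L ih =>
    rw [qciN_cons, ← mul_assoc, qciX_pow_comm_pow, smul_mul_assoc, mul_assoc, ih,
      mul_smul_comm, smul_smul, List.map_cons, List.prod_cons, mul_assoc]

lemma q_ne_zero (hqc : ∀ i j, q i j * q j i = 1) (i j : Fin c) : q i j ≠ 0 := by
  intro h
  have := hqc i j
  rw [h, zero_mul] at this
  exact zero_ne_one this

end aux2

section aux3
variable {k : Type} [Field k] {c : ℕ} {q : Fin c → Fin c → k} {a : Fin c → ℕ}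

lemma qciL0_nodup : (((List.finRange c).map Fin.rev) : List (Fin c)).Nodup :=
  (List.nodup_finRange c).map Fin.rev_injective

lemma qciL0_mem (i : Fin c) : i ∈ ((List.finRange c).map Fin.rev) :=
  List.mem_map.2 ⟨i.rev, List.mem_finRange _, i.rev_rev⟩

/-- Splitting the full index list at `i`. -/
lemma qciL0_split (i : Fin c) :
    ∃ S T : List (Fin c), ((List.finRange c).map Fin.rev) = S ++ i :: T ∧
      i ∉ S ∧ i ∉ T := by
  obtain ⟨S, T, hST⟩ := List.append_of_mem (qciL0_mem i)
  have hnd := qciL0_nodup (c := c)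
  rw [hST] at hnd
  rw [List.nodup_append] at hnd
  obtain ⟨-, hT, hdisj⟩ := hnd
  rw [List.nodup_cons] at hT
  exact ⟨S, T, hST, fun hS => hdisj i hS i List.mem_cons_self rfl, hT.1⟩

lemma qciM_eq_zero (h : Fin c → ℕ) (i : Fin c) (hi : a i ≤ h i) :
    qciM q a h = (0 : QCI k c q a) := by
  obtain ⟨S, T, hST, -, -⟩ := qciL0_split i
  rw [qciM, hST, qciN_append, qciN_cons]
  have : qciX k q a i ^ h i = 0 := by
    have : h i = a i + (h i - a i) := by omega
    rw [this, pow_add, qciX_pow_a, zero_mul]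
  rw [this]
  simp

lemma qci_pow_mul_M (hqc : ∀ i j, q i j * q j i = 1) (i : Fin c) (n : ℕ) (h : Fin c → ℕ) :
    ∃ s : k, s ≠ 0 ∧ qciX k q a i ^ n * qciM q a h
      = s • qciM q a (fun j => if j = i then h j + n else h j) := by
  obtain ⟨S, T, hST, hiS, hiT⟩ := qciL0_split i
  set h' : Fin c → ℕ := fun j => if j = i then h j + n else h j with hh'
  refine ⟨(S.map fun j => q i j ^ (n * h j)).prod, ?_, ?_⟩
  · refine List.prod_ne_zero fun hx => ?_
    simp only [List.mem_map] at hx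
    obtain ⟨j, -, hj⟩ := hx
    exact pow_ne_zero _ (q_ne_zero hqc i j) hj
  · have hS : qciN q a S h = qciN q a S h' := qciN_congr fun j hj => by
      have hji : j ≠ i := fun hji => hiS (hji ▸ hj)
      simp [hh', hji]
    have hT : qciN q a T h = qciN q a T h' := qciN_congr fun j hj => by
      have hji : j ≠ i := fun hji => hiT (hji ▸ hj)
      simp [hh', hji]
    rw [qciM, qciM, hST, qciN_append, qciN_cons, qciN_append, qciN_cons,
      ← mul_assoc, qci_pow_mul_N, smul_mul_assoc, mul_assoc, ← mul_assoc (qciX k q a i ^ n),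
      ← pow_add, hS, hT]
    have : n + h i = h' i := by simp [hh', Nat.add_comm]
    rw [this]

end aux3

section aux4
variable {k : Type} [Field k] {c : ℕ} {q : Fin c → Fin c → k} {a : Fin c → ℕ}

lemma qci_N_mul_M (hqc : ∀ i j, q i j * q j i = 1) (L : List (Fin c)) (hL : L.Nodup)
    (f g : Fin c → ℕ) :
    ∃ s : k, s ≠ 0 ∧ qciN q a L f * qciM q a g
      = s • qciM q a (fun i => if i ∈ L then f i + g i else g i) := by
  induction L with
  | nil =>
    refine ⟨1, one_ne_zero, ?_⟩
    simp [qciN_nil]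
  | cons j L ih =>
    rw [List.nodup_cons] at hL
    obtain ⟨hjL, hL⟩ := hL
    obtain ⟨s, hs, hrec⟩ := ih hL
    obtain ⟨t, ht, hmul⟩ := qci_pow_mul_M (a := a) hqc j (f j)
      (fun i => if i ∈ L then f i + g i else g i)
    refine ⟨s * t, mul_ne_zero hs ht, ?_⟩
    rw [qciN_cons, mul_assoc, hrec, mul_smul_comm, hmul, smul_smul]
    congr 2
    funext i
    by_cases hij : i = j
    · subst hij
      simp [hjL, Nat.add_comm]
    · simp [hij, List.mem_cons]

lemma qci_M_mul_M (hqc : ∀ i j, q i j * q j i = 1) (f g : Fin c → ℕ) :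
    ∃ s : k, s ≠ 0 ∧ qciM q a f * qciM q a g = s • qciM q a (fun i => f i + g i) := by
  obtain ⟨s, hs, hmul⟩ := qci_N_mul_M (a := a) hqc ((List.finRange c).map Fin.rev)
    qciL0_nodup f g
  refine ⟨s, hs, ?_⟩
  rw [qciM, hmul]
  have he : (fun i => if i ∈ (List.finRange c).map Fin.rev then f i + g i else g i)
      = fun i => f i + g i := funext fun i => by simp [qciL0_mem i]
  rw [he]

end aux4

theorem qci_frobenius
    (k : Type) [Field k] (c : ℕ) (hc : 1 ≤ c)
    (q : Fin c → Fin c → k) (a : Fin c → ℕ)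
    (hqd : ∀ i, q i i = 1) (hqc : ∀ i j, q i j * q j i = 1) (ha : ∀ i, 2 ≤ a i)
    -- the descending monomials form a k-basis of A
    (b : Module.Basis ((i : Fin c) → Fin (a i)) k (QCI k c q a))
    (hb : ∀ d, b d = qciDMono k q a d)
    -- φ is the coefficient of the socle monomial x_c^{a_c-1} ⋯ x_1^{a_1-1}
    (φ : QCI k c q a →ₗ[k] k)
    (hφ : φ = b.coord fun i => ⟨a i - 1, by have := ha i; omega⟩) :
    (∀ x : QCI k c q a, (∀ y : QCI k c q a, φ (x * y) = 0) → x = 0) ∧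
    (∀ y : QCI k c q a, (∀ x : QCI k c q a, φ (x * y) = 0) → y = 0) ∧
    ∃ e : QCI k c q a ≃ₗ[k] (QCI k c q a →ₗ[k] k),
      (∀ x l : QCI k c q a, e x l = φ (l * x)) ∧
      -- e is a morphism of left A-modules, where (b • f)(λ) = f(λb)
      (∀ x y l : QCI k c q a, e (x * y) l = e y (l * x)) := by
  classical
  have hb' : ∀ d, b d = qciM q a (fun i => (d i : ℕ)) :=
    fun d => (hb d).trans (qciDMono_eq d)
  set top : (i : Fin c) → Fin (a i) := (fun i => ⟨a i - 1, by have := ha i; omega⟩) with htop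
  have hφb : ∀ d, φ (b d) = if d = top then 1 else 0 := by
    intro d
    rw [hφ]
    simp only [Module.Basis.coord_apply, Module.Basis.repr_self, htop]
    rw [Finsupp.single_apply]
  -- the value of φ on a merged monomial against the complementary monomial
  have hsum : ∀ d e : (i : Fin c) → Fin (a i),
      φ (qciM q a (fun i => (e i : ℕ) + (a i - 1 - (d i : ℕ)))) =
        if e = d then 1 else 0 := by
    intro d e
    by_cases hbig : ∃ i, (d i : ℕ) < (e i : ℕ)
    · obtain ⟨i0, hi0⟩ := hbig
      have hz : qciM q a (fun i => (e i : ℕ) + (a i - 1 - (d i : ℕ)))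
          = (0 : QCI k c q a) := by
        refine qciM_eq_zero _ i0 ?_
        have h1 : (d i0 : ℕ) < a i0 := (d i0).isLt
        omega
      have hne : e ≠ d := fun hED => by rw [hED] at hi0; omega
      rw [hz, map_zero, if_neg hne]
    · push_neg at hbig
      have hlt : ∀ i, (e i : ℕ) + (a i - 1 - (d i : ℕ)) < a i := by
        intro i
        have h1 : (d i : ℕ) < a i := (d i).isLt
        have h2 := hbig i
        omega
      set dd : (i : Fin c) → Fin (a i) := fun i => ⟨_, hlt i⟩ with hdd
      have hM : qciM q a (fun i => (e i : ℕ) + (a i - 1 - (d i : ℕ))) = b dd := by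
        rw [hb' dd]
      rw [hM, hφb]
      by_cases hed : e = d
      · subst hed
        have : dd = top := by
          funext i
          have h1 : (e i : ℕ) < a i := (e i).isLt
          exact Fin.ext (by simp [hdd, htop]; omega)
        rw [if_pos this, if_pos rfl]
      · have : dd ≠ top := by
          intro hdt
          apply hed
          funext i
          have h1 : (d i : ℕ) < a i := (d i).isLt
          have h2 := hbig i
          have h3 : (dd i : ℕ) = (top i : ℕ) := by rw [hdt]
          simp [hdd, htop] at h3
          exact Fin.ext (by omega)
        rw [if_neg this, if_neg hed]
  -- products of basis monomials with the complementary monomial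
  have hterm : ∀ d e : (i : Fin c) → Fin (a i), ∃ s : k, s ≠ 0 ∧
      φ (b e * qciM q a (fun i => a i - 1 - (d i : ℕ))) = s * (if e = d then 1 else 0) := by
    intro d e
    obtain ⟨s, hs, hm⟩ := qci_M_mul_M (a := a) hqc (fun i => (e i : ℕ))
      (fun i => a i - 1 - (d i : ℕ))
    exact ⟨s, hs, by rw [hb' e, hm, map_smul, smul_eq_mul, hsum d e]⟩
  have hterm' : ∀ d e : (i : Fin c) → Fin (a i), ∃ s : k, s ≠ 0 ∧
      φ (qciM q a (fun i => a i - 1 - (d i : ℕ)) * b e) = s * (if e = d then 1 else 0) := by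
    intro d e
    obtain ⟨s, hs, hm⟩ := qci_M_mul_M (a := a) hqc (fun i => a i - 1 - (d i : ℕ))
      (fun i => (e i : ℕ))
    have hcomm : (fun i => (a i - 1 - (d i : ℕ)) + (e i : ℕ))
        = fun i => (e i : ℕ) + (a i - 1 - (d i : ℕ)) := funext fun i => Nat.add_comm _ _
    rw [hcomm] at hm
    exact ⟨s, hs, by rw [hb' e, hm, map_smul, smul_eq_mul, hsum d e]⟩
  -- expansions
  have hexpR : ∀ (x y : QCI k c q a),
      φ (x * y) = ∑ e, b.repr x e * φ (b e * y) := by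
    intro x y
    conv_lhs => rw [← b.sum_repr x]
    rw [Finset.sum_mul, map_sum]
    exact Finset.sum_congr rfl fun e _ => by rw [smul_mul_assoc, map_smul, smul_eq_mul]
  have hexpL : ∀ (x y : QCI k c q a),
      φ (x * y) = ∑ e, b.repr y e * φ (x * b e) := by
    intro x y
    conv_lhs => rw [← b.sum_repr y]
    rw [Finset.mul_sum, map_sum]
    exact Finset.sum_congr rfl fun e _ => by rw [mul_smul_comm, map_smul, smul_eq_mul]
  -- right nondegeneracy
  have hR : ∀ x : QCI k c q a, (∀ y : QCI k c q a, φ (x * y) = 0) → x = 0 := by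
    intro x hx
    have hcoef : ∀ d, b.repr x d = 0 := by
      intro d
      have h0 := hx (qciM q a (fun i => a i - 1 - (d i : ℕ)))
      rw [hexpR] at h0
      obtain ⟨s, hs, hm⟩ := hterm d d
      rw [Finset.sum_eq_single d (fun e _ hne => by
          obtain ⟨t, ht, hm'⟩ := hterm d e
          rw [hm', if_neg hne, mul_zero, mul_zero])
        (fun hd => absurd (Finset.mem_univ d) hd), hm, if_pos rfl, mul_one] at h0
      exact (mul_eq_zero.1 h0).resolve_right hs
    have : b.repr x = 0 := Finsupp.ext hcoef
    have := congrArg b.repr.symm this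
    simpa using this
  -- left nondegeneracy
  have hL : ∀ y : QCI k c q a, (∀ x : QCI k c q a, φ (x * y) = 0) → y = 0 := by
    intro y hy
    have hcoef : ∀ d, b.repr y d = 0 := by
      intro d
      have h0 := hy (qciM q a (fun i => a i - 1 - (d i : ℕ)))
      rw [hexpL] at h0
      obtain ⟨s, hs, hm⟩ := hterm' d d
      rw [Finset.sum_eq_single d (fun e _ hne => by
          obtain ⟨t, ht, hm'⟩ := hterm' d e
          rw [hm', if_neg hne, mul_zero, mul_zero])
        (fun hd => absurd (Finset.mem_univ d) hd), hm, if_pos rfl, mul_one] at h0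
      exact (mul_eq_zero.1 h0).resolve_right hs
    have : b.repr y = 0 := Finsupp.ext hcoef
    have := congrArg b.repr.symm this
    simpa using this
  refine ⟨hR, hL, ?_⟩
  haveI : FiniteDimensional k (QCI k c q a) := Module.Finite.of_basis b
  set T : QCI k c q a →ₗ[k] (QCI k c q a →ₗ[k] k) :=
    LinearMap.mk₂ k (fun x l => φ (l * x))
      (fun x x' l => by rw [mul_add, map_add])
      (fun s x l => by rw [mul_smul_comm, map_smul])
      (fun x l l' => by rw [add_mul, map_add])
      (fun s x l => by rw [smul_mul_assoc, map_smul]) with hT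
  have hinj : Function.Injective T := by
    intro x₁ x₂ h12
    have happ : ∀ l, φ (l * x₁) = φ (l * x₂) := fun l => congrArg (fun F => F l) h12
    have hz' : ∀ l, φ (l * (x₁ - x₂)) = 0 := fun l => by
      rw [mul_sub, map_sub, happ l, sub_self]
    exact sub_eq_zero.1 (hL _ hz')
  have hfr : Module.finrank k (QCI k c q a)
      = Module.finrank k (QCI k c q a →ₗ[k] k) :=
    (Subspace.dual_finrank_eq (K := k) (V := QCI k c q a)).symm
  have hsurj : Function.Surjective T :=
    (LinearMap.injective_iff_surjective_of_finrank_eq_finrank hfr).1 hinj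
  refine ⟨LinearEquiv.ofBijective T ⟨hinj, hsurj⟩, fun x l => rfl, fun x y l => ?_⟩
  show φ (l * (x * y)) = φ ((l * x) * y)
  rw [mul_assoc]
end
end

section
/- Let A_q^{a_c} be a quantum complete intersection over a field k, defined by the commutation matrix q and exponents a_c = (a_1, …, a_c). Set a_{2c} = (a_1, …, a_c, a_1, …, a_c) and let q′ be the 2c×2c block matrix [[q, qᵀ],[qᵀ, q]], where qᵀ is the transpose of q. Then q′ is a commutation matrix (q′_{uu} = 1 and q′_{uv}q′_{vu} = 1 for all u, v), and the quantum complete intersection A_{q′}^{a_{2c}} is a symmetric k-algebra. -/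
/-!
For a quantum complete intersection `A_q^{a_c}`, the doubled data
`a_{2c} = (a, a)` and `q' = [[q, qᵀ], [qᵀ, q]]` again form a commutation matrix, and
the quantum complete intersection `A_{q'}^{a_{2c}}` is a symmetric algebra
(Proposition `symmetric`).
-/

noncomputable section

/-- `A` is a symmetric `k`-algebra: there is a trace form `φ` with `φ(ab) = φ(ba)` whose
associated bilinear form `(a,b) ↦ φ(ab)` is nondegenerate. -/
def IsSymmAlg (k A : Type) [Field k] [Ring A] [Algebra k A] : Prop :=
  ∃ φ : A →ₗ[k] k, (∀ x y : A, φ (x * y) = φ (y * x)) ∧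
    (∀ x : A, (∀ y : A, φ (x * y) = 0) → x = 0) ∧
    (∀ y : A, (∀ x : A, φ (x * y) = 0) → y = 0)

/-- The `2c × 2c` block matrix `[[q, qᵀ], [qᵀ, q]]`. -/
def blockQ {k : Type} {c : ℕ} (q : Fin c → Fin c → k) : Fin (c + c) → Fin (c + c) → k :=
  fun u v =>
    Fin.addCases
      (fun i => Fin.addCases (fun j => q i j) (fun j => q j i) v)
      (fun i => Fin.addCases (fun j => q j i) (fun j => q i j) v) u

/-- The doubled exponent sequence `(a_1, …, a_c, a_1, …, a_c)`. -/
def blockA {c : ℕ} (a : Fin c → ℕ) : Fin (c + c) → ℕ :=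
  fun u => Fin.addCases (fun i => a i) (fun i => a i) u

namespace QciSym

variable {k : Type} [Field k] {n : ℕ} (q : Fin n → Fin n → k) (a : Fin n → ℕ)

/-- The module underlying the concrete representation. -/
abbrev B (k : Type) [Field k] (n : ℕ) : Type := (Fin n → ℕ) →₀ k

/-- The commutation coefficient. -/
def gam (u : Fin n) (f : Fin n → ℕ) : k := ∏ w ∈ Finset.Iio u, q u w ^ f w

/-- Value of the `u`-th generator acting on a basis vector. -/
def Lval (u : Fin n) (e : Fin n → ℕ) : B k n :=
  if e u + 1 ≤ a u - 1 then Finsupp.single (e + Pi.single u 1) (gam q u e) else 0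

/-- Action of the `u`-th generator. -/
def L (u : Fin n) : B k n →ₗ[k] B k n :=
  Finsupp.lsum k fun e => LinearMap.toSpanSingleton k (B k n) (Lval q a u e)

lemma L_single (u : Fin n) (e : Fin n → ℕ) (c : k) :
    L q a u (Finsupp.single e c) = c • Lval q a u e := by
  simp [L, Finsupp.lsum_single, LinearMap.toSpanSingleton_apply]

lemma gam_congr {u : Fin n} {f g : Fin n → ℕ} (h : ∀ w, w < u → f w = g w) :
    gam q u f = gam q u g :=
  Finset.prod_congr rfl fun w hw => by rw [h w (Finset.mem_Iio.1 hw)]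

lemma gam_add_single (u v : Fin n) (s : ℕ) (f : Fin n → ℕ) :
    gam q u (f + Pi.single v s) = gam q u f * (if v < u then q u v ^ s else 1) := by
  unfold gam
  simp only [Pi.add_apply, pow_add, Finset.prod_mul_distrib]
  congr 1
  by_cases hv : v < u
  · rw [Finset.prod_eq_single v (fun w _ hw => by rw [Pi.single_eq_of_ne hw, pow_zero])
      (fun hv' => absurd (Finset.mem_Iio.2 hv) hv'), Pi.single_eq_same, if_pos hv]
  · rw [if_neg hv]
    refine Finset.prod_eq_one fun w hw => ?_
    have : w ≠ v := fun h => hv (h ▸ Finset.mem_Iio.1 hw)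
    rw [Pi.single_eq_of_ne this, pow_zero]

lemma gam_ne_zero (hc : ∀ u v, q u v * q v u = 1) (u : Fin n) (f : Fin n → ℕ) :
    gam q u f ≠ 0 := by
  refine Finset.prod_ne_zero_iff.2 fun w _ => pow_ne_zero _ ?_
  exact left_ne_zero_of_mul_eq_one (hc u w)

lemma Lpow (u : Fin n) (m : ℕ) (e : Fin n → ℕ) (h : e u + m ≤ a u - 1) :
    ((L q a u) ^ m) (Finsupp.single e 1) =
      Finsupp.single (e + Pi.single u m) (gam q u e ^ m) := by
  induction m generalizing e with
  | zero => simp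
  | succ m ih =>
    have h1 : e u + 1 ≤ a u - 1 := by omega
    rw [pow_succ, Module.End.mul_apply, L_single, one_smul, Lval, if_pos h1]
    have hs : Finsupp.single (e + Pi.single u 1) (gam q u e) =
        gam q u e • Finsupp.single (e + Pi.single u 1) (1 : k) := by
      rw [Finsupp.smul_single, smul_eq_mul, mul_one]
    rw [hs, map_smul, ih (e + Pi.single u 1) (by simp; omega)]
    have hg : gam q u (e + Pi.single u 1) = gam q u e :=
      gam_congr q fun w hw => by
        rw [Pi.add_apply, Pi.single_eq_of_ne (ne_of_lt hw), add_zero]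
    rw [hg, Finsupp.smul_single, smul_eq_mul, ← pow_succ', add_assoc, ← Pi.single_add,
      Nat.add_comm 1 m]

lemma Lpow_zero (u : Fin n) (m : ℕ) (e : Fin n → ℕ) (c : k) (h : a u - 1 < e u + m)
    (hm : 1 ≤ m) : ((L q a u) ^ m) (Finsupp.single e c) = 0 := by
  induction m generalizing e c with
  | zero => omega
  | succ m ih =>
    rw [pow_succ, Module.End.mul_apply, L_single, Lval]
    by_cases h1 : e u + 1 ≤ a u - 1
    · rw [if_pos h1]
      rcases Nat.eq_zero_or_pos m with hm0 | hm0
      · omega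
      · rw [Finsupp.smul_single]
        exact ih (e + Pi.single u 1) _ (by simp; omega) hm0
    · rw [if_neg h1, smul_zero, map_zero]

lemma L_nilp (ha : ∀ u, 2 ≤ a u) (u : Fin n) : (L q a u) ^ (a u) = 0 := by
  apply Finsupp.lhom_ext (fun e c => ?_)
  rw [LinearMap.zero_apply]
  exact Lpow_zero q a u (a u) e c (by have := ha u; omega) (by have := ha u; omega)

lemma L_comm (hd : ∀ u, q u u = 1) (hc : ∀ u v, q u v * q v u = 1) (u v : Fin n) :
    L q a u * L q a v = q u v • (L q a v * L q a u) := by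
  by_cases huv : u = v
  · subst huv; rw [hd u, one_smul]
  apply Finsupp.lhom_ext (fun e c => ?_)
  have hvu : (e + Pi.single v 1 : Fin n → ℕ) u = e u := by
    rw [Pi.add_apply, Pi.single_eq_of_ne huv, add_zero]
  have huv' : (e + Pi.single u 1 : Fin n → ℕ) v = e v := by
    rw [Pi.add_apply, Pi.single_eq_of_ne (Ne.symm huv), add_zero]
  rw [Module.End.mul_apply, LinearMap.smul_apply, Module.End.mul_apply,
    L_single, L_single, Lval, Lval]
  by_cases cv : e v + 1 ≤ a v - 1 <;> by_cases cu : e u + 1 ≤ a u - 1 <;>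
    simp only [cv, cu, if_true, if_false, ite_true, ite_false, Finsupp.smul_single,
      L_single, Lval, hvu, huv', smul_zero, map_zero, smul_eq_mul, mul_zero]
  rw [gam_add_single, gam_add_single, add_right_comm]
  congr 1
  rcases lt_or_gt_of_ne huv with hlt | hlt
  · rw [if_neg (not_lt.2 hlt.le), if_pos hlt, pow_one]
    linear_combination (-(c * gam q u e * gam q v e)) * (hc u v)
  · rw [if_pos hlt, if_neg (not_lt.2 hlt.le), pow_one]
    ring

variable (k) in
/-- The representation of the free algebra. -/
def rho0 : FreeAlgebra k (Fin n) →ₐ[k] Module.End k (B k n) :=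
  FreeAlgebra.lift k fun u => L q a u

/-- The representation of the quantum complete intersection. -/
def rho (hd : ∀ u, q u u = 1) (hc : ∀ u v, q u v * q v u = 1) (ha : ∀ u, 2 ≤ a u) :
    QCI k n q a →ₐ[k] Module.End k (B k n) :=
  RingQuot.liftAlgHom k ⟨rho0 k q a, by
    rintro x y (⟨i, rfl, rfl⟩ | ⟨i, j, rfl, rfl⟩)
    · rw [map_pow, map_zero, rho0, FreeAlgebra.lift_ι_apply, L_nilp q a ha]
    · simp only [map_mul, map_smul, rho0, FreeAlgebra.lift_ι_apply]
      exact L_comm q a hd hc i j⟩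

/-- Generators of the QCI. -/
def xg (u : Fin n) : QCI k n q a :=
  RingQuot.mkAlgHom k (qciRel k n q a) (FreeAlgebra.ι k u)

lemma rho_xg (hd : ∀ u, q u u = 1) (hc : ∀ u v, q u v * q v u = 1) (ha : ∀ u, 2 ≤ a u)
    (u : Fin n) : rho q a hd hc ha (xg q a u) = L q a u := by
  rw [rho, xg, RingQuot.liftAlgHom_mkAlgHom_apply, rho0, FreeAlgebra.lift_ι_apply]

/-- Ordered monomial over a list of indices. -/
def monL (l : List (Fin n)) (e : Fin n → ℕ) : QCI k n q a :=
  (l.map fun u => xg q a u ^ e u).prod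

/-- The ordered monomial. -/
def mon (e : Fin n → ℕ) : QCI k n q a := monL q a (List.finRange n) e

lemma xg_pow_rel (u : Fin n) : xg q a u ^ a u = 0 := by
  have h := RingQuot.mkAlgHom_rel k (s := qciRel k n q a)
    (Or.inl ⟨u, rfl, rfl⟩ : qciRel k n q a (FreeAlgebra.ι k u ^ a u) 0)
  rwa [map_pow, map_zero] at h

lemma xg_comm (u v : Fin n) :
    xg q a u * xg q a v = q u v • (xg q a v * xg q a u) := by
  have h := RingQuot.mkAlgHom_rel k (s := qciRel k n q a)
    (Or.inr ⟨u, v, rfl, rfl⟩ : qciRel k n q a (FreeAlgebra.ι k u * FreeAlgebra.ι k v)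
      (q u v • (FreeAlgebra.ι k v * FreeAlgebra.ι k u)))
  rwa [map_mul, map_smul, map_mul] at h

lemma xg_comm_pow (u v : Fin n) (m : ℕ) :
    xg q a u * xg q a v ^ m = (q u v ^ m) • (xg q a v ^ m * xg q a u) := by
  induction m with
  | zero => simp
  | succ m ih =>
    rw [pow_succ', ← mul_assoc, xg_comm, smul_mul_assoc, mul_assoc, ih, mul_smul_comm,
      smul_smul, pow_succ', mul_assoc]

lemma monL_cons (v : Fin n) (l : List (Fin n)) (e : Fin n → ℕ) :
    monL q a (v :: l) e = xg q a v ^ e v * monL q a l e := by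
  rw [monL, List.map_cons, List.prod_cons]; rfl

lemma monL_congr (l : List (Fin n)) (e e' : Fin n → ℕ) (h : ∀ w ∈ l, e w = e' w) :
    monL q a l e = monL q a l e' := by
  unfold monL
  congr 1
  exact List.map_congr_left fun u hu => by rw [h u hu]

lemma monL_zero (l : List (Fin n)) (e : Fin n → ℕ) (u : Fin n) (hu : u ∈ l)
    (he : a u ≤ e u) : monL q a l e = 0 := by
  induction l with
  | nil => simp at hu
  | cons v l ih =>
    rw [monL_cons]
    rcases List.mem_cons.1 hu with heq | hu'
    · subst heq
      have : xg q a u ^ e u = 0 := by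
        rw [show e u = a u + (e u - a u) by omega, pow_add, xg_pow_rel, zero_mul]
      rw [this, zero_mul]
    · rw [ih hu', mul_zero]

lemma monL_one (l : List (Fin n)) : monL q a l 0 = 1 := by
  induction l with
  | nil => rfl
  | cons v l ih => rw [monL_cons, ih, Pi.zero_apply, pow_zero, one_mul]

lemma monL_eq_one (l : List (Fin n)) (e : Fin n → ℕ) (h : ∀ w ∈ l, e w = 0) :
    monL q a l e = 1 := by
  rw [monL_congr q a l e 0 h]
  exact monL_one q a l

lemma move (l : List (Fin n)) (hl : l.Pairwise (· < ·)) (u : Fin n) (hu : u ∈ l)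
    (e : Fin n → ℕ) :
    ∃ c : k, xg q a u * monL q a l e = c • monL q a l (e + Pi.single u 1) := by
  induction l with
  | nil => simp at hu
  | cons v l ih =>
    rw [monL_cons]
    have hpl := (List.pairwise_cons.1 hl).2
    rcases List.mem_cons.1 hu with heq | hu'
    · subst heq
      refine ⟨1, ?_⟩
      have hnotin : ∀ w ∈ l, (e + Pi.single u 1 : Fin n → ℕ) w = e w := by
        intro w hw
        have : u < w := (List.pairwise_cons.1 hl).1 w hw
        rw [Pi.add_apply, Pi.single_eq_of_ne (ne_of_gt this), add_zero]
      rw [one_smul, monL_cons, ← mul_assoc, ← pow_succ']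
      congr 1
      · congr 1
        rw [Pi.add_apply, Pi.single_eq_same]
      · exact (monL_congr q a l _ _ hnotin).symm
    · obtain ⟨c, hc⟩ := ih hpl hu'
      refine ⟨q u v ^ e v * c, ?_⟩
      have hne : v ≠ u := ne_of_lt ((List.pairwise_cons.1 hl).1 u hu')
      have hv : (e + Pi.single u 1 : Fin n → ℕ) v = e v := by
        rw [Pi.add_apply, Pi.single_eq_of_ne hne, add_zero]
      rw [← mul_assoc, xg_comm_pow, smul_mul_assoc, mul_assoc, hc, mul_smul_comm,
        smul_smul, monL_cons, hv]

variable (hd : ∀ u, q u u = 1) (hc : ∀ u v, q u v * q v u = 1) (ha : ∀ u, 2 ≤ a u)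

lemma act (l : List (Fin n)) (hl : l.Pairwise (· < ·)) (e f : Fin n → ℕ)
    (hf : ∀ u, f u ≤ a u - 1) :
    rho q a hd hc ha (monL q a l e) (Finsupp.single f 1) =
      if ∀ u ∈ l, f u + e u ≤ a u - 1 then
        Finsupp.single (f + fun w => if w ∈ l then e w else 0)
          ((l.map fun u => gam q u f ^ e u).prod)
      else 0 := by
  induction l with
  | nil =>
    have h0 : (f + fun _ : Fin n => (0 : ℕ)) = f := by funext w; simp
    simp [monL, h0]
  | cons v l ih =>
    rw [monL_cons, map_mul, map_pow, rho_xg, Module.End.mul_apply,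
      ih (List.pairwise_cons.1 hl).2]
    by_cases hcond : ∀ u ∈ l, f u + e u ≤ a u - 1
    · rw [if_pos hcond]
      have hvnotl : v ∉ l := fun hv => lt_irrefl v ((List.pairwise_cons.1 hl).1 v hv)
      set g : Fin n → ℕ := f + fun w => if w ∈ l then e w else 0 with hg
      have hgv : g v = f v := by simp [hg, hvnotl]
      have hsingle : Finsupp.single g ((l.map fun u => gam q u f ^ e u).prod) =
          ((l.map fun u => gam q u f ^ e u).prod) • Finsupp.single g (1 : k) := by
        rw [Finsupp.smul_single, smul_eq_mul, mul_one]
      rw [hsingle, map_smul]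
      by_cases hv : f v + e v ≤ a v - 1
      · rw [Lpow q a v (e v) g (by rw [hgv]; exact hv)]
        have hgam : gam q v g = gam q v f := by
          refine gam_congr q fun w hw => ?_
          have hwl : w ∉ l := fun hmem =>
            absurd ((List.pairwise_cons.1 hl).1 w hmem) (not_lt.2 hw.le)
          simp [hg, hwl]
        have hvec : g + Pi.single v (e v) =
            f + fun w => if w ∈ v :: l then e w else 0 := by
          funext w
          by_cases hwv : w = v
          · subst hwv
            simp [hg, hvnotl, Pi.single_eq_same]
          · simp [hg, Pi.single_eq_of_ne hwv, List.mem_cons, hwv]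
        rw [hgam, hvec,
          if_pos (show ∀ u ∈ v :: l, f u + e u ≤ a u - 1 from
            List.forall_mem_cons.2 ⟨hv, hcond⟩), List.map_cons,
          List.prod_cons, Finsupp.smul_single, smul_eq_mul, mul_comm]
      · have h1 : 1 ≤ e v := by have := hf v; omega
        rw [Lpow_zero q a v (e v) g _ (by rw [hgv]; omega) h1, smul_zero,
          if_neg (fun hall => hv (hall v List.mem_cons_self))]
    · rw [if_neg hcond, map_zero,
        if_neg (fun hall => hcond fun u hu => hall u (List.mem_cons_of_mem v hu))]

/-- The full commutation coefficient. -/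
def Cfull (e f : Fin n → ℕ) : k := ∏ u, gam q u f ^ e u

lemma act_mon (e f : Fin n → ℕ) (hf : ∀ u, f u ≤ a u - 1) :
    rho q a hd hc ha (mon q a e) (Finsupp.single f 1) =
      if ∀ u, f u + e u ≤ a u - 1 then Finsupp.single (f + e) (Cfull q e f)
      else 0 := by
  rw [mon, act q a hd hc ha _ (List.pairwise_lt_finRange n) e f hf]
  have h1 : (fun w => if w ∈ List.finRange n then e w else 0) = e := by
    funext w; simp [List.mem_finRange]
  have h2 : ((List.finRange n).map fun u => gam q u f ^ e u).prod = Cfull q e f :=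
    (Fin.prod_univ_def _).symm
  have h3 : (∀ u ∈ List.finRange n, f u + e u ≤ a u - 1) ↔ ∀ u, f u + e u ≤ a u - 1 := by
    simp [List.mem_finRange]
  rw [h1, h2]
  by_cases h : ∀ u, f u + e u ≤ a u - 1
  · rw [if_pos (h3.2 h), if_pos h]
  · rw [if_neg (fun hx => h (h3.1 hx)), if_neg h]

/-- The exponent type. -/
abbrev Ty (a : Fin n → ℕ) : Type := (u : Fin n) → Fin (a u)

/-- Exponent vector of an element of `Ty`. -/
def emb (e : Ty a) : Fin n → ℕ := fun u => (e u : ℕ)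

/-- The monomial basis family. -/
def fam (e : Ty a) : QCI k n q a := mon q a (emb a e)

lemma xmul_mem (u : Fin n) (s : QCI k n q a)
    (hs : s ∈ Submodule.span k (Set.range (fam q a))) :
    xg q a u * s ∈ Submodule.span k (Set.range (fam q a)) := by
  induction hs using Submodule.span_induction with
  | mem x hx =>
    obtain ⟨e, rfl⟩ := hx
    obtain ⟨c, hcm⟩ := move q a (List.finRange n) (List.pairwise_lt_finRange n) u
      (List.mem_finRange u) (emb a e)
    rw [show fam q a e = monL q a (List.finRange n) (emb a e) from rfl, hcm]
    by_cases hlt : (e u : ℕ) + 1 ≤ a u - 1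
    · have hup : (u : Fin n) → True := fun _ => trivial
      refine Submodule.smul_mem _ _ (Submodule.subset_span ?_)
      refine ⟨Function.update e u ⟨(e u : ℕ) + 1, by omega⟩, ?_⟩
      have hemb : emb a (Function.update e u ⟨(e u : ℕ) + 1, by omega⟩) =
          emb a e + Pi.single u 1 := by
        funext w
        by_cases hw : w = u
        · subst hw
          simp [emb, Function.update_self, Pi.single_eq_same]
        · simp [emb, Function.update_of_ne hw, Pi.single_eq_of_ne hw]
      rw [show fam q a _ = monL q a (List.finRange n) (emb a _) from rfl, hemb]
    · have hz : monL q a (List.finRange n) (emb a e + Pi.single u 1) = 0 := by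
        refine monL_zero q a _ _ u (List.mem_finRange u) ?_
        have h1 : (e u : ℕ) < a u := (e u).isLt
        have h2 : emb a e u = (e u : ℕ) := rfl
        rw [Pi.add_apply, Pi.single_eq_same]
        omega
      rw [hz, smul_zero]
      exact Submodule.zero_mem _
  | zero => rw [mul_zero]; exact Submodule.zero_mem _
  | add x y hx hy ihx ihy => rw [mul_add]; exact Submodule.add_mem _ ihx ihy
  | smul c x hx ih => rw [mul_smul_comm]; exact Submodule.smul_mem _ _ ih

lemma one_mem_span (ha : ∀ u, 2 ≤ a u) :
    (1 : QCI k n q a) ∈ Submodule.span k (Set.range (fam q a)) := by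
  have he : fam q a (fun u => (⟨0, by have := ha u; omega⟩ : Fin (a u))) = 1 :=
    monL_eq_one q a _ _ fun w _ => rfl
  rw [← he]
  exact Submodule.subset_span ⟨_, rfl⟩

lemma span_top (ha : ∀ u, 2 ≤ a u) (z : QCI k n q a) :
    z ∈ Submodule.span k (Set.range (fam q a)) := by
  obtain ⟨w, rfl⟩ := RingQuot.mkAlgHom_surjective k (qciRel k n q a) z
  have main : ∀ w : FreeAlgebra k (Fin n),
      ∀ s ∈ Submodule.span k (Set.range (fam q a)),
        RingQuot.mkAlgHom k (qciRel k n q a) w * s ∈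
          Submodule.span k (Set.range (fam q a)) := by
    intro w
    induction w using FreeAlgebra.induction with
    | grade0 r =>
      intro s hs
      rw [AlgHom.commutes, ← Algebra.smul_def]
      exact Submodule.smul_mem _ _ hs
    | grade1 u => exact fun s hs => xmul_mem q a u s hs
    | mul x y ihx ihy =>
      intro s hs
      rw [map_mul, mul_assoc]
      exact ihx _ (ihy s hs)
    | add x y ihx ihy =>
      intro s hs
      rw [map_add, add_mul]
      exact Submodule.add_mem _ (ihx s hs) (ihy s hs)
  have h1 := main w 1 (one_mem_span q a ha)
  rwa [mul_one] at h1

/-- The linear evaluation map. -/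
def psi : QCI k n q a →ₗ[k] B k n where
  toFun z := rho q a hd hc ha z (Finsupp.single 0 1)
  map_add' x y := by simp [map_add]
  map_smul' c x := by simp [map_smul]

/-- The trace form. -/
def phi : QCI k n q a →ₗ[k] k :=
  (Finsupp.lapply (R := k) (fun u => a u - 1)).comp (psi q a hd hc ha)

lemma gam_zero (u : Fin n) : gam q u 0 = 1 := by simp [gam]

lemma Cfull_zero (e : Fin n → ℕ) : Cfull q e 0 = 1 := by simp [Cfull, gam_zero]

lemma psi_fam (e : Ty a) : psi q a hd hc ha (fam q a e) = Finsupp.single (emb a e) 1 := by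
  have adm : ∀ u, (0 : Fin n → ℕ) u + emb a e u ≤ a u - 1 := by
    intro u
    have := (e u).isLt
    have := ha u
    simp only [Pi.zero_apply, zero_add]
    unfold emb
    omega
  rw [show psi q a hd hc ha (fam q a e) =
    rho q a hd hc ha (mon q a (emb a e)) (Finsupp.single 0 1) from rfl,
    act_mon q a hd hc ha (emb a e) 0 (fun u => by simp), if_pos adm, Cfull_zero, zero_add]

lemma phi_pair (e f : Ty a) :
    phi q a hd hc ha (fam q a e * fam q a f) =
      if ∀ u, (f u : ℕ) + (e u : ℕ) = a u - 1 then Cfull q (emb a e) (emb a f)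
      else 0 := by
  have hff : ∀ u, emb a f u ≤ a u - 1 := by
    intro u; have := (f u).isLt; have := ha u; unfold emb; omega
  have h1 : phi q a hd hc ha (fam q a e * fam q a f) =
      Finsupp.lapply (R := k) (fun u => a u - 1)
        (rho q a hd hc ha (fam q a e) (Finsupp.single (emb a f) 1)) := by
    rw [phi, LinearMap.comp_apply, ← psi_fam q a hd hc ha f]
    congr 1
    rw [show psi q a hd hc ha (fam q a e * fam q a f) =
      rho q a hd hc ha (fam q a e * fam q a f) (Finsupp.single 0 1) from rfl, map_mul]
    rfl
  rw [h1, show fam q a e = mon q a (emb a e) from rfl,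
    act_mon q a hd hc ha (emb a e) (emb a f) hff]
  by_cases h : ∀ u, (f u : ℕ) + (e u : ℕ) = a u - 1
  · have hle : ∀ u, emb a f u + emb a e u ≤ a u - 1 := fun u => (h u).le
    have hvec : (emb a f + emb a e : Fin n → ℕ) = fun u => a u - 1 := by
      funext u; exact h u
    rw [if_pos hle, if_pos h, hvec]
    simp [Finsupp.lapply]
  · rw [if_neg h]
    by_cases hle : ∀ u, emb a f u + emb a e u ≤ a u - 1
    · rw [if_pos hle]
      have hvec : (emb a f + emb a e : Fin n → ℕ) ≠ fun u => a u - 1 := by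
        intro hx
        exact h fun u => congrFun hx u
      simp only [Finsupp.lapply_apply]
      exact Finsupp.single_eq_of_ne hvec.symm
    · rw [if_neg hle, map_zero]

lemma prodprod_mul (F G : Fin n → Fin n → k) :
    (∏ u, ∏ w ∈ Finset.Iio u, F u w) * (∏ u, ∏ w ∈ Finset.Iio u, G u w) =
      ∏ u, ∏ w ∈ Finset.Iio u, (F u w * G u w) := by
  rw [← Finset.prod_mul_distrib]
  exact Finset.prod_congr rfl fun u _ => Finset.prod_mul_distrib.symm

lemma prod_Iio_swap (F : Fin n → Fin n → k) :
    ∏ u, ∏ w ∈ Finset.Iio u, F u w = ∏ u, ∏ w ∈ Finset.Ioi u, F w u := by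
  rw [Finset.prod_sigma', Finset.prod_sigma']
  refine Finset.prod_nbij' (fun p => ⟨p.2, p.1⟩) (fun p => ⟨p.2, p.1⟩) ?_ ?_ ?_ ?_ ?_ <;>
    simp

lemma Cfull_expand (e f : Fin n → ℕ) :
    Cfull q e f = ∏ u, ∏ w ∈ Finset.Iio u, q u w ^ (f w * e u) := by
  unfold Cfull gam
  refine Finset.prod_congr rfl fun u _ => ?_
  rw [← Finset.prod_pow]
  exact Finset.prod_congr rfl fun w _ => (pow_mul _ _ _).symm

lemma Yone (hd : ∀ u, q u u = 1) (key : ∀ u, ∏ w, q u w ^ (a w - 1) = 1)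
    (e : Fin n → ℕ) :
    ∏ u, ∏ w ∈ Finset.Iio u, (q u w ^ ((a w - 1) * e u) * q w u ^ ((a u - 1) * e w)) = 1 := by
  rw [← prodprod_mul]
  have hB : (∏ u, ∏ w ∈ Finset.Iio u, q w u ^ ((a u - 1) * e w)) =
      ∏ u, ∏ w ∈ Finset.Ioi u, q u w ^ ((a w - 1) * e u) :=
    prod_Iio_swap (fun u w => q w u ^ ((a u - 1) * e w))
  rw [hB, ← Finset.prod_mul_distrib]
  refine Finset.prod_eq_one fun u _ => ?_
  rw [mul_comm, ← Finset.prod_disjUnion (Finset.disjoint_Ioi_Iio u),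
    Finset.Ioi_disjUnion_Iio u]
  have huniv : (∏ w, q u w ^ ((a w - 1) * e u)) = 1 := by
    have hx : ∀ w : Fin n, q u w ^ ((a w - 1) * e u) = (q u w ^ (a w - 1)) ^ e u := by
      intro w; rw [← pow_mul]
    rw [Finset.prod_congr rfl fun w _ => hx w, Finset.prod_pow, key u, one_pow]
  have h4 := Finset.prod_mul_prod_compl ({u} : Finset (Fin n))
    (fun w => q u w ^ ((a w - 1) * e u))
  rw [Finset.prod_singleton, hd u, one_pow, one_mul, huniv] at h4
  convert h4 using 2

lemma PPone (hc : ∀ u v, q u v * q v u = 1) (g : Fin n → Fin n → ℕ) :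
    (∏ u, ∏ w ∈ Finset.Iio u, q u w ^ g u w) *
      (∏ u, ∏ w ∈ Finset.Iio u, q w u ^ g u w) = 1 := by
  rw [prodprod_mul]
  refine Finset.prod_eq_one fun u _ => Finset.prod_eq_one fun w _ => ?_
  rw [← mul_pow, hc u w, one_pow]

lemma PPtwo (hd : ∀ u, q u u = 1) (hc : ∀ u v, q u v * q v u = 1)
    (key : ∀ u, ∏ w, q u w ^ (a w - 1) = 1) (e f : Fin n → ℕ)
    (h : ∀ w, f w + e w = a w - 1) :
    (∏ u, ∏ w ∈ Finset.Iio u, q u w ^ (f w * e u)) *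
      (∏ u, ∏ w ∈ Finset.Iio u, q w u ^ (e w * f u)) = 1 := by
  have hM : (∏ u, ∏ w ∈ Finset.Iio u, (q u w ^ (e w * e u) * q w u ^ (e w * e u))) = 1 := by
    refine Finset.prod_eq_one fun u _ => Finset.prod_eq_one fun w _ => ?_
    rw [← mul_pow, hc u w, one_pow]
  have step : ∀ u w : Fin n,
      q u w ^ (f w * e u) * q w u ^ (e w * f u) * (q u w ^ (e w * e u) * q w u ^ (e w * e u)) =
        q u w ^ ((a w - 1) * e u) * q w u ^ ((a u - 1) * e w) := by
    intro u w
    have h1 : f w * e u + e w * e u = (a w - 1) * e u := by rw [← Nat.add_mul, h w]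
    have h2 : e w * f u + e w * e u = (a u - 1) * e w := by
      rw [← Nat.mul_add, h u, Nat.mul_comm]
    calc q u w ^ (f w * e u) * q w u ^ (e w * f u) *
          (q u w ^ (e w * e u) * q w u ^ (e w * e u))
        = (q u w ^ (f w * e u) * q u w ^ (e w * e u)) *
          (q w u ^ (e w * f u) * q w u ^ (e w * e u)) := by ring
      _ = q u w ^ (f w * e u + e w * e u) * q w u ^ (e w * f u + e w * e u) := by
          rw [pow_add, pow_add]
      _ = q u w ^ ((a w - 1) * e u) * q w u ^ ((a u - 1) * e w) := by rw [h1, h2]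
  calc (∏ u, ∏ w ∈ Finset.Iio u, q u w ^ (f w * e u)) *
        (∏ u, ∏ w ∈ Finset.Iio u, q w u ^ (e w * f u))
      = ((∏ u, ∏ w ∈ Finset.Iio u, q u w ^ (f w * e u)) *
        (∏ u, ∏ w ∈ Finset.Iio u, q w u ^ (e w * f u))) *
        (∏ u, ∏ w ∈ Finset.Iio u, (q u w ^ (e w * e u) * q w u ^ (e w * e u))) := by
        rw [hM, mul_one]
    _ = ∏ u, ∏ w ∈ Finset.Iio u,
          (q u w ^ (f w * e u) * q w u ^ (e w * f u) *
            (q u w ^ (e w * e u) * q w u ^ (e w * e u))) := by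
        rw [prodprod_mul, prodprod_mul]
    _ = ∏ u, ∏ w ∈ Finset.Iio u,
          (q u w ^ ((a w - 1) * e u) * q w u ^ ((a u - 1) * e w)) :=
        Finset.prod_congr rfl fun u _ => Finset.prod_congr rfl fun w _ => step u w
    _ = 1 := Yone q a hd key e

lemma Cfull_symm (hd : ∀ u, q u u = 1) (hc : ∀ u v, q u v * q v u = 1)
    (key : ∀ u, ∏ w, q u w ^ (a w - 1) = 1) (e f : Fin n → ℕ)
    (h : ∀ w, f w + e w = a w - 1) :
    Cfull q e f = Cfull q f e := by
  set X := ∏ u, ∏ w ∈ Finset.Iio u, q u w ^ (f w * e u) with hX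
  set Y := ∏ u, ∏ w ∈ Finset.Iio u, q u w ^ (e w * f u) with hY
  set Z := ∏ u, ∏ w ∈ Finset.Iio u, q w u ^ (e w * f u) with hZ
  have hYZ : Y * Z = 1 := PPone q hc _
  have hXZ : X * Z = 1 := PPtwo q a hd hc key e f h
  have hXY : X = Y := by
    calc X = X * (Y * Z) := by rw [hYZ, mul_one]
      _ = Y * (X * Z) := by ring
      _ = Y := by rw [hXZ, mul_one]
  rw [Cfull_expand, Cfull_expand, ← hX, ← hY]
  exact hXY

lemma Cfull_ne_zero (hc : ∀ u v, q u v * q v u = 1) (e f : Fin n → ℕ) :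
    Cfull q e f ≠ 0 := by
  refine Finset.prod_ne_zero_iff.2 fun u _ => pow_ne_zero _ ?_
  exact gam_ne_zero q hc u f

lemma pair_symm (key : ∀ u, ∏ w, q u w ^ (a w - 1) = 1) (e f : Ty a) :
    phi q a hd hc ha (fam q a e * fam q a f) =
      phi q a hd hc ha (fam q a f * fam q a e) := by
  rw [phi_pair q a hd hc ha, phi_pair q a hd hc ha]
  by_cases h : ∀ u, (f u : ℕ) + (e u : ℕ) = a u - 1
  · rw [if_pos h, if_pos (fun u => by have := h u; omega)]
    exact Cfull_symm q a hd hc key (emb a e) (emb a f) h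
  · rw [if_neg h, if_neg (fun hcon => h fun u => by have := hcon u; omega)]

lemma phi_symm (key : ∀ u, ∏ w, q u w ^ (a w - 1) = 1) (x y : QCI k n q a) :
    phi q a hd hc ha (x * y) = phi q a hd hc ha (y * x) := by
  obtain ⟨cx, hx⟩ := (Submodule.mem_span_range_iff_exists_fun k).1 (span_top q a ha x)
  obtain ⟨cy, hy⟩ := (Submodule.mem_span_range_iff_exists_fun k).1 (span_top q a ha y)
  rw [← hx, ← hy]
  simp only [Finset.sum_mul, Finset.mul_sum, smul_mul_assoc, mul_smul_comm, map_sum,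
    map_smul, smul_eq_mul]
  rw [Finset.sum_comm]
  refine Finset.sum_congr rfl fun e _ => Finset.sum_congr rfl fun f _ => ?_
  rw [pair_symm q a hd hc ha key e f]
  ring

lemma phi_nondeg (key : ∀ u, ∏ w, q u w ^ (a w - 1) = 1) (x : QCI k n q a)
    (hx : ∀ y, phi q a hd hc ha (x * y) = 0) : x = 0 := by
  obtain ⟨c, hcx⟩ := (Submodule.mem_span_range_iff_exists_fun k).1 (span_top q a ha x)
  have hc0 : ∀ e₀ : Ty a, c e₀ = 0 := by
    intro e₀
    set f₀ : Ty a := fun u => ⟨a u - 1 - (e₀ u : ℕ), by have := ha u; omega⟩ with hf₀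
    have hval := hx (fam q a f₀)
    rw [← hcx, Finset.sum_mul, map_sum] at hval
    have hterm : ∀ e : Ty a,
        phi q a hd hc ha ((c e • fam q a e) * fam q a f₀) =
          c e * (if ∀ u, (f₀ u : ℕ) + (e u : ℕ) = a u - 1 then
            Cfull q (emb a e) (emb a f₀) else 0) := by
      intro e
      rw [smul_mul_assoc, map_smul, smul_eq_mul, phi_pair q a hd hc ha]
    rw [Finset.sum_congr rfl fun e _ => hterm e] at hval
    rw [Finset.sum_eq_single e₀ (fun e _ hne => ?_) (fun h => absurd (Finset.mem_univ e₀) h)]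
      at hval
    · have hcond : ∀ u, (f₀ u : ℕ) + (e₀ u : ℕ) = a u - 1 := by
        intro u
        have h1 : (e₀ u : ℕ) < a u := (e₀ u).isLt
        have h2 : (f₀ u : ℕ) = a u - 1 - (e₀ u : ℕ) := rfl
        have := ha u
        omega
      rw [if_pos hcond] at hval
      exact (mul_eq_zero.1 hval).resolve_right (Cfull_ne_zero q hc _ _)
    · have hnc : ¬ ∀ u, (f₀ u : ℕ) + (e u : ℕ) = a u - 1 := by
        intro hall
        apply hne
        funext u
        have h1 : (e u : ℕ) < a u := (e u).isLt
        have h2 : (e₀ u : ℕ) < a u := (e₀ u).isLt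
        have h3 : (f₀ u : ℕ) = a u - 1 - (e₀ u : ℕ) := rfl
        have h4 := hall u
        have := ha u
        exact Fin.ext (by omega)
      rw [if_neg hnc, mul_zero]
  rw [← hcx]
  exact Finset.sum_eq_zero fun e _ => by rw [hc0 e, zero_smul]

include hd hc ha in
theorem qci_isSymmAlg (key : ∀ u, ∏ w, q u w ^ (a w - 1) = 1) :
    IsSymmAlg k (QCI k n q a) := by
  refine ⟨phi q a hd hc ha, phi_symm q a hd hc ha key, phi_nondeg q a hd hc ha key, ?_⟩
  intro y hy
  refine phi_nondeg q a hd hc ha key y fun x => ?_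
  rw [phi_symm q a hd hc ha key]
  exact hy x

end QciSym

theorem doubled_qci_is_symmetric
    (k : Type) [Field k] (c : ℕ) (hc : 1 ≤ c)
    (q : Fin c → Fin c → k) (a : Fin c → ℕ)
    (hqd : ∀ i, q i i = 1) (hqc : ∀ i j, q i j * q j i = 1) (ha : ∀ i, 2 ≤ a i) :
    (∀ u, blockQ q u u = 1) ∧ (∀ u v, blockQ q u v * blockQ q v u = 1) ∧
    IsSymmAlg k (QCI k (c + c) (blockQ q) (blockA a)) := by
  have hdiag : ∀ u, blockQ q u u = 1 := by
    intro u
    refine Fin.addCases (motive := fun u => blockQ q u u = 1)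
      (fun i => ?_) (fun i => ?_) u <;>
      simp only [blockQ, Fin.addCases_left, Fin.addCases_right] <;> exact hqd i
  have hcomm : ∀ u v, blockQ q u v * blockQ q v u = 1 := by
    intro u v
    refine Fin.addCases (motive := fun u => blockQ q u v * blockQ q v u = 1)
      (fun i => ?_) (fun i => ?_) u <;>
      refine Fin.addCases (motive := fun v => blockQ q _ v * blockQ q v _ = 1)
        (fun j => ?_) (fun j => ?_) v <;>
      simp only [blockQ, Fin.addCases_left, Fin.addCases_right] <;>
      first
        | exact hqc _ _
        | (rw [mul_comm]; exact hqc _ _)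
  have ha2 : ∀ u, 2 ≤ blockA a u := by
    intro u
    refine Fin.addCases (motive := fun u => 2 ≤ blockA a u)
      (fun i => ?_) (fun i => ?_) u <;>
      simp only [blockA, Fin.addCases_left, Fin.addCases_right] <;> exact ha i
  have key : ∀ u, ∏ w, blockQ q u w ^ (blockA a w - 1) = 1 := by
    intro u
    refine Fin.addCases (motive := fun u => ∏ w, blockQ q u w ^ (blockA a w - 1) = 1)
      (fun i => ?_) (fun i => ?_) u
    · show ∏ w, blockQ q (Fin.castAdd c i) w ^ (blockA a w - 1) = 1
      rw [Fin.prod_univ_add (fun w => blockQ q (Fin.castAdd c i) w ^ (blockA a w - 1))]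
      have h1 : ∀ j, blockQ q (Fin.castAdd c i) (Fin.castAdd c j) ^
          (blockA a (Fin.castAdd c j) - 1) = q i j ^ (a j - 1) := by
        intro j; simp only [blockQ, blockA, Fin.addCases_left, Fin.addCases_right]
      have h2 : ∀ j, blockQ q (Fin.castAdd c i) (Fin.natAdd c j) ^
          (blockA a (Fin.natAdd c j) - 1) = q j i ^ (a j - 1) := by
        intro j; simp only [blockQ, blockA, Fin.addCases_left, Fin.addCases_right]
      rw [Finset.prod_congr rfl fun j _ => h1 j, Finset.prod_congr rfl fun j _ => h2 j,
        ← Finset.prod_mul_distrib]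
      refine Finset.prod_eq_one fun j _ => ?_
      rw [← mul_pow, hqc i j, one_pow]
    · show ∏ w, blockQ q (Fin.natAdd c i) w ^ (blockA a w - 1) = 1
      rw [Fin.prod_univ_add (fun w => blockQ q (Fin.natAdd c i) w ^ (blockA a w - 1))]
      have h1 : ∀ j, blockQ q (Fin.natAdd c i) (Fin.castAdd c j) ^
          (blockA a (Fin.castAdd c j) - 1) = q j i ^ (a j - 1) := by
        intro j; simp only [blockQ, blockA, Fin.addCases_left, Fin.addCases_right]
      have h2 : ∀ j, blockQ q (Fin.natAdd c i) (Fin.natAdd c j) ^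
          (blockA a (Fin.natAdd c j) - 1) = q i j ^ (a j - 1) := by
        intro j; simp only [blockQ, blockA, Fin.addCases_left, Fin.addCases_right]
      rw [Finset.prod_congr rfl fun j _ => h1 j, Finset.prod_congr rfl fun j _ => h2 j,
        ← Finset.prod_mul_distrib]
      refine Finset.prod_eq_one fun j _ => ?_
      rw [mul_comm, ← mul_pow, hqc i j, one_pow]
  exact ⟨hdiag, hcomm, QciSym.qci_isSymmAlg (blockQ q) (blockA a) hdiag hcomm ha2 key⟩
end
end
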